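/- Let p_i, p_j, p_k, p_l be points in ℝ^d with p_j ≠ p_k, and let w_j, w_k, w_l be nonzero reals with w_j + w_k ≠ 0 satisfying the equilibrium condition w_j(p_i - p_j) + w_k(p_i - p_k) + w_l(p_i - p_l) = 0. If q is the point on the line through p_j and p_k that also lies on the line through p_i and p_l, and p_j - q = r • (q - p_k) for some real r, then r = w_k / w_j. -/
import Mathlib


/-- The affine ratio at the intersection of the lines `p_j p_k` and `p_i p_l`
at a trivalent equilibrium vertex equals `w_k / w_j`. -/
theorem stmt_1 (d : ℕ) (pi pj pk pl : Fin d → ℝ) (wj wk wl : ℝ)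
    (hjk : pj ≠ pk)
    (hwj : wj ≠ 0) (hwk : wk ≠ 0) (hwl : wl ≠ 0) (hsum : wj + wk ≠ 0)
    (heq : wj • (pi - pj) + wk • (pi - pk) + wl • (pi - pl) = 0)
    (q : Fin d → ℝ)
    (hq1 : ∃ s : ℝ, q = pj + s • (pk - pj))
    (hq2 : ∃ t : ℝ, q = pi + t • (pl - pi))
    (huniq : ∀ q' : Fin d → ℝ, (∃ s : ℝ, q' = pj + s • (pk - pj)) →
      (∃ t : ℝ, q' = pi + t • (pl - pi)) → q' = q)
    (r : ℝ) (hr : pj - q = r • (q - pk)) :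
    r = wk / wj := by
  set q0 : Fin d → ℝ := (wj + wk)⁻¹ • (wj • pj + wk • pk) with hq0def
  have hq0 : q0 = q := by
    apply huniq
    · refine ⟨wk / (wj + wk), ?_⟩
      funext x
      simp only [hq0def, Pi.smul_apply, Pi.add_apply, Pi.sub_apply, smul_eq_mul]
      field_simp
      ring
    · refine ⟨-wl / (wj + wk), ?_⟩
      funext x
      have h := congrFun heq x
      simp only [Pi.add_apply, Pi.smul_apply, Pi.sub_apply, Pi.zero_apply,
        smul_eq_mul] at h
      simp only [hq0def, Pi.smul_apply, Pi.add_apply, Pi.sub_apply, smul_eq_mul]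
      field_simp
      nlinarith [h]
  have hjq : pj - q = (wk / (wj + wk)) • (pj - pk) := by
    rw [← hq0]
    funext x
    simp only [hq0def, Pi.smul_apply, Pi.add_apply, Pi.sub_apply, smul_eq_mul]
    field_simp
    ring
  have hqk : q - pk = (wj / (wj + wk)) • (pj - pk) := by
    rw [← hq0]
    funext x
    simp only [hq0def, Pi.smul_apply, Pi.add_apply, Pi.sub_apply, smul_eq_mul]
    field_simp
    ring
  rw [hjq, hqk, smul_smul] at hr
  have hne : pj - pk ≠ 0 := sub_ne_zero.mpr hjk
  have : wk / (wj + wk) - r * (wj / (wj + wk)) = 0 := by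
    by_contra h
    exact hne (by
      have := sub_eq_zero.mpr hr
      rw [← sub_smul] at this
      exact (smul_eq_zero.mp this).resolve_left h)
  have h2 : wk - r * wj = 0 := by
    field_simp at this
    linarith
  field_simp
  linarith
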